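/- Let ρ₀ be the uniform probability measure on [−1,1] ⊂ ℝ, ρ₂ = ½δ₁ + ½δ₋₁, and ρ₁ = ρ₀ (uniform on [−1,1]). Consider the 3-marginal problem at times 0, ½, 1 with cost c(x₀,x₁,x₂) equal to the minimal acceleration energy of a C² curve through (0,x₀), (½,x₁), (1,x₂). Then the Kantorovich infimum over plans with marginals (ρ₀, ρ₁, ρ₂) is 0, but there exists no pair of Borel maps T₁, T₂ : [−1,1] → ℝ with (T₁)_*ρ₀ = ρ₁, (T₂)_*ρ₀ = ρ₂ and ∫ c(x, T₁(x), T₂(x)) dρ₀(x) = 0; i.e., no Monge solution attains the Kantorovich optimum. -/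

import Mathlib

open MeasureTheory

/-- Minimal acceleration energy of a `C²` curve through `(0,x₀)`, `(1/2,x₁)`, `(1,x₂)`. -/
noncomputable def acc3 (x0 x1 x2 : ℝ) : ℝ :=
  sInf { e : ℝ | ∃ γ : ℝ → ℝ, ContDiff ℝ 2 γ ∧
    γ 0 = x0 ∧ γ (1/2) = x1 ∧ γ 1 = x2 ∧
    e = ∫ t in (0:ℝ)..1, ‖deriv (deriv γ) t‖ ^ 2 }

/-- Uniform probability measure on `[-1,1]`. -/
noncomputable def unif : Measure ℝ := (2 : ENNReal)⁻¹ • volume.restrict (Set.Icc (-1:ℝ) 1)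

def accSet (x0 x1 x2 : ℝ) : Set ℝ :=
  { e : ℝ | ∃ γ : ℝ → ℝ, ContDiff ℝ 2 γ ∧
    γ 0 = x0 ∧ γ (1/2) = x1 ∧ γ 1 = x2 ∧
    e = ∫ t in (0:ℝ)..1, ‖deriv (deriv γ) t‖ ^ 2 }

lemma acc3_eq (x0 x1 x2 : ℝ) : acc3 x0 x1 x2 = sInf (accSet x0 x1 x2) := rfl

lemma smooth2 {γ : ℝ → ℝ} (h : ContDiff ℝ 2 γ) :
    Differentiable ℝ γ ∧ Differentiable ℝ (deriv γ) ∧ Continuous (deriv (deriv γ)) := by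
  have h2 := contDiff_succ_iff_deriv.mp (show ContDiff ℝ ((1:ℕ)+1) γ by exact_mod_cast h)
  have h1 := contDiff_succ_iff_deriv.mp (show ContDiff ℝ ((0:ℕ)+1) (deriv γ) by exact_mod_cast h2.2.2)
  exact ⟨h2.1, h1.1, h1.2.2.continuous⟩

lemma mem_nonneg {x0 x1 x2 e : ℝ} (he : e ∈ accSet x0 x1 x2) : 0 ≤ e := by
  obtain ⟨γ, _, _, _, _, rfl⟩ := he
  exact intervalIntegral.integral_nonneg (by norm_num) (fun t _ => by positivity)

lemma hasDerivAt_affine (a b t : ℝ) : HasDerivAt (fun t : ℝ => a + t * b) b t := by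
  exact (((hasDerivAt_id t).mul_const b).const_add a).congr_deriv (one_mul b)

lemma deriv_affine (a b : ℝ) : deriv (fun t : ℝ => a + t * b) = fun _ => b :=
  funext fun t => (hasDerivAt_affine a b t).deriv

lemma contDiff_affine (a b : ℝ) : ContDiff ℝ 2 (fun t : ℝ => a + t * b) := by
  fun_prop

lemma contDiff_quad (a b c : ℝ) : ContDiff ℝ 2 (fun t : ℝ => a + t * b + t^2 * c) := by
  fun_prop

lemma accSet_nonempty (x0 x1 x2 : ℝ) : (accSet x0 x1 x2).Nonempty := by
  refine ⟨_, ⟨fun t => x0 + t * (4*x1 - 3*x0 - x2) + t^2 * (2*x0 + 2*x2 - 4*x1),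
    contDiff_quad _ _ _, by norm_num, by ring_nf, by ring_nf, rfl⟩⟩

lemma accSet_bddBelow (x0 x1 x2 : ℝ) : BddBelow (accSet x0 x1 x2) :=
  ⟨0, fun _ he => mem_nonneg he⟩

lemma acc3_nonneg (x0 x1 x2 : ℝ) : 0 ≤ acc3 x0 x1 x2 :=
  Real.sInf_nonneg (fun _ he => mem_nonneg he)

lemma acc3_midpoint {x0 x1 x2 : ℝ} (h : x1 = (x0 + x2)/2) : acc3 x0 x1 x2 = 0 := by
  have h0 : (0:ℝ) ∈ accSet x0 x1 x2 := by
    refine ⟨fun t => x0 + t * (x2 - x0), contDiff_affine _ _, by norm_num,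
      by rw [h]; ring, by ring, ?_⟩
    rw [deriv_affine]
    simp
  exact le_antisymm (csInf_le (accSet_bddBelow _ _ _) h0)
    (le_csInf ⟨0, h0⟩ fun _ he => mem_nonneg he)

lemma secondDeriv_add_affine {γ : ℝ → ℝ} (hγ : Differentiable ℝ γ) (a b : ℝ) :
    deriv (deriv (fun t => γ t + (a + t * b))) = deriv (deriv γ) := by
  have h1 : deriv (fun t => γ t + (a + t * b)) = fun t => deriv γ t + b := by
    funext t
    exact ((hγ t).hasDerivAt.add (hasDerivAt_affine a b t)).deriv
  rw [h1]
  funext t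
  exact deriv_add_const b

lemma mem_shift {x0 x1 x2 e : ℝ} (he : e ∈ accSet x0 x1 x2) :
    e ∈ accSet 0 (x1 - (x0 + x2)/2) 0 := by
  obtain ⟨γ, hγ, h0, hh, h1, rfl⟩ := he
  refine ⟨fun t => γ t + (-x0 + t * (x0 - x2)), hγ.add (contDiff_affine _ _),
    by simp [h0], by beta_reduce; rw [hh]; ring, by beta_reduce; rw [h1]; ring, ?_⟩
  rw [secondDeriv_add_affine (smooth2 hγ).1]

lemma mem_unshift {x0 x1 x2 e : ℝ} (he : e ∈ accSet 0 (x1 - (x0 + x2)/2) 0) :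
    e ∈ accSet x0 x1 x2 := by
  obtain ⟨γ, hγ, h0, hh, h1, rfl⟩ := he
  refine ⟨fun t => γ t + (x0 + t * (x2 - x0)), hγ.add (contDiff_affine _ _),
    by simp [h0], by beta_reduce; rw [hh]; ring, by beta_reduce; rw [h1]; ring, ?_⟩
  rw [secondDeriv_add_affine (smooth2 hγ).1]

lemma accSet_shift (x0 x1 x2 : ℝ) : accSet x0 x1 x2 = accSet 0 (x1 - (x0 + x2)/2) 0 :=
  Set.ext fun _ => ⟨mem_shift, mem_unshift⟩

lemma secondDeriv_const_mul {γ : ℝ → ℝ} (hγ : ContDiff ℝ 2 γ) (m : ℝ) :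
    deriv (deriv (fun t => m * γ t)) = fun t => m * deriv (deriv γ) t := by
  have h1 : deriv (fun t => m * γ t) = fun t => m * deriv γ t := by
    funext t; exact (((smooth2 hγ).1 t).hasDerivAt.const_mul m).deriv
  rw [h1]
  funext t
  exact (((smooth2 hγ).2.1 t).hasDerivAt.const_mul m).deriv

lemma mem_scale {c m e : ℝ} (he : e ∈ accSet 0 c 0) :
    m^2 * e ∈ accSet 0 (m * c) 0 := by
  obtain ⟨γ, hγ, h0, hh, h1, rfl⟩ := he
  refine ⟨fun t => m * γ t, hγ.const_smul m, by simp [h0], by beta_reduce; rw [hh], by simp [h1], ?_⟩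
  rw [secondDeriv_const_mul hγ, ← intervalIntegral.integral_const_mul]
  congr 1; funext t
  rw [norm_mul]
  rw [mul_pow]
  congr 1
  simp [sq_abs, Real.norm_eq_abs]

lemma accSet_scale {m : ℝ} (hm : m ≠ 0) :
    accSet 0 m 0 = (fun e => m^2 * e) '' accSet 0 1 0 := by
  ext e
  constructor
  · intro he
    refine ⟨(m⁻¹)^2 * e, by simpa [inv_mul_cancel₀ hm] using mem_scale (m := m⁻¹) he, ?_⟩
    field_simp
  · rintro ⟨e', he', rfl⟩
    simpa using mem_scale (m := m) (c := 1) he'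

lemma acc3_scale {m : ℝ} (hm : m ≠ 0) : acc3 0 m 0 = m^2 * acc3 0 1 0 := by
  rw [acc3_eq, acc3_eq, accSet_scale hm]
  exact (Monotone.map_csInf_of_continuousAt (f := fun e => m^2 * e)
    (by fun_prop) (fun a b hab => mul_le_mul_of_nonneg_left hab (sq_nonneg m))
    (accSet_nonempty 0 1 0) (accSet_bddBelow 0 1 0)).symm

lemma acc3_formula (x0 x1 x2 : ℝ) :
    acc3 x0 x1 x2 = (x1 - (x0 + x2)/2)^2 * acc3 0 1 0 := by
  rw [acc3_eq, accSet_shift, ← acc3_eq]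
  rcases eq_or_ne (x1 - (x0 + x2)/2) 0 with h | h
  · rw [h, acc3_midpoint (by norm_num)]; ring
  · rw [acc3_scale h]

lemma kappa_lb : (16:ℝ) ≤ acc3 0 1 0 := by
  rw [acc3_eq]
  refine le_csInf (accSet_nonempty 0 1 0) ?_
  rintro e ⟨γ, hγ, h0, hh, h1, rfl⟩
  obtain ⟨hd1, hd2, hc2⟩ := smooth2 hγ
  obtain ⟨a, ha, hda⟩ := exists_hasDerivAt_eq_slope γ (deriv γ) (by norm_num : (0:ℝ) < 1/2)
    (hd1.continuous.continuousOn) (fun x _ => (hd1 x).hasDerivAt)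
  obtain ⟨b, hb, hdb⟩ := exists_hasDerivAt_eq_slope γ (deriv γ) (by norm_num : (1:ℝ)/2 < 1)
    (hd1.continuous.continuousOn) (fun x _ => (hd1 x).hasDerivAt)
  rw [h0, hh] at hda
  rw [hh, h1] at hdb
  have hab : a ≤ b := le_of_lt (ha.2.trans hb.1)
  have hftc : ∫ t in a..b, deriv (deriv γ) t = deriv γ b - deriv γ a :=
    intervalIntegral.integral_deriv_eq_sub (fun x _ => hd2 x) (hc2.intervalIntegrable a b)
  have hval : deriv γ b - deriv γ a = -4 := by
    rw [hda, hdb]; norm_num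
  have h4 : (4:ℝ) ≤ ∫ t in a..b, |deriv (deriv γ) t| := by
    have := intervalIntegral.abs_integral_le_integral_abs (f := fun t => deriv (deriv γ) t)
      (μ := volume) hab
    rw [hftc, hval] at this
    simpa using this
  have hmono : (∫ t in a..b, 8 * |deriv (deriv γ) t|) ≤
      ∫ t in a..b, (16 + ‖deriv (deriv γ) t‖^2) := by
    apply intervalIntegral.integral_mono_on hab
    · exact (continuous_const.mul hc2.abs).intervalIntegrable a b
    · exact (continuous_const.add ((hc2.norm).pow 2)).intervalIntegrable a b
    · intro x _
      have := sq_nonneg (|deriv (deriv γ) x| - 4)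
      rw [Real.norm_eq_abs]
      nlinarith
  rw [intervalIntegral.integral_const_mul] at hmono
  have hsplit : (∫ t in a..b, (16 + ‖deriv (deriv γ) t‖^2)) =
      16 * (b - a) + ∫ t in a..b, ‖deriv (deriv γ) t‖^2 := by
    rw [intervalIntegral.integral_add (g := fun t => ‖deriv (deriv γ) t‖^2) (intervalIntegrable_const)
      (((hc2.norm).pow 2).intervalIntegrable a b)]
    simp [mul_comm]
  have hsub : (∫ t in a..b, ‖deriv (deriv γ) t‖^2) ≤ ∫ t in (0:ℝ)..1, ‖deriv (deriv γ) t‖^2 := by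
    apply intervalIntegral.integral_mono_interval (le_of_lt ha.1) hab (le_of_lt hb.2)
    · filter_upwards with t using by positivity
    · exact ((hc2.norm).pow 2).intervalIntegrable 0 1
  have hba : b - a ≤ 1 := by
    have := ha.1; have := hb.2; linarith
  nlinarith

instance unif_prob : IsProbabilityMeasure unif := by
  constructor
  rw [unif]
  simp [Real.volume_Icc]
  rw [show ENNReal.ofReal (1 + 1) = 2 by norm_num,
    ENNReal.inv_mul_cancel (by norm_num) (by norm_num)]

lemma map_affine_unif (s : ℝ) :
    Measure.map (fun x => (x + s)/2) unif =
      volume.restrict (Set.Icc ((s-1)/2) ((s+1)/2)) := by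
  have hg : (fun x : ℝ => (x + s)/2) = (fun y => s/2 + y) ∘ (fun x => 2⁻¹ * x) := by
    funext x; simp; ring
  have hmeas1 : Measurable (fun x : ℝ => 2⁻¹ * x) := by fun_prop
  have hmeas2 : Measurable (fun y : ℝ => s/2 + y) := by fun_prop
  have hvol : Measure.map (fun x : ℝ => (x + s)/2) volume = ENNReal.ofReal 2 • volume := by
    rw [hg, ← Measure.map_map hmeas2 hmeas1, Real.map_volume_mul_left (by norm_num : (2:ℝ)⁻¹ ≠ 0),
      Measure.map_smul, map_add_left_eq_self volume (s/2)]
    norm_num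
  have hpre : Set.Icc (-1:ℝ) 1 = (fun x : ℝ => (x + s)/2) ⁻¹' Set.Icc ((s-1)/2) ((s+1)/2) := by
    ext x
    simp only [Set.mem_Icc, Set.mem_preimage]
    constructor <;> intro h <;> constructor <;> linarith [h.1, h.2]
  rw [unif, Measure.map_smul, hpre,
    ← Measure.restrict_map (by fun_prop) measurableSet_Icc, hvol]
  rw [Measure.restrict_smul, smul_smul]
  rw [show ENNReal.ofReal 2 = 2 by norm_num, ENNReal.inv_mul_cancel (by norm_num) (by norm_num),
    one_smul]

lemma restrict_split :
    volume.restrict (Set.Icc (-1:ℝ) 1) =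
      volume.restrict (Set.Icc (-1:ℝ) 0) + volume.restrict (Set.Icc (0:ℝ) 1) := by
  have hu : Set.Icc (-1:ℝ) 1 = Set.Icc (-1:ℝ) 0 ∪ Set.Ioc (0:ℝ) 1 := by
    ext x
    simp only [Set.mem_Icc, Set.mem_union, Set.mem_Ioc]
    constructor
    · intro h; rcases le_or_gt x 0 with h0 | h0
      · exact Or.inl ⟨h.1, h0⟩
      · exact Or.inr ⟨h0, h.2⟩
    · rintro (⟨h1, h2⟩ | ⟨h1, h2⟩) <;> constructor <;> linarith
  rw [hu, Measure.restrict_union (by rw [Set.disjoint_left]; rintro a ⟨_, ha2⟩ ⟨hb1, _⟩; linarith)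
    measurableSet_Ioc, Measure.restrict_congr_set Ioc_ae_eq_Icc]

noncomputable def Fmap (s : ℝ) : ℝ → (Fin 3 → ℝ) := fun x => ![x, (x + s)/2, s]

lemma Fmap_meas (s : ℝ) : Measurable (Fmap s) := by
  apply measurable_pi_lambda
  intro i
  fin_cases i <;> simp [Fmap] <;> fun_prop

lemma ennhalf : (2:ENNReal)⁻¹ + 2⁻¹ = 1 := by
  rw [← two_mul, ENNReal.mul_inv_cancel] <;> norm_num

noncomputable def piPlan : Measure (Fin 3 → ℝ) :=
  (2:ENNReal)⁻¹ • (unif.map (Fmap 1)) + (2:ENNReal)⁻¹ • (unif.map (Fmap (-1)))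

instance : IsProbabilityMeasure piPlan := by
  have h1 : IsProbabilityMeasure (unif.map (Fmap 1)) :=
    Measure.isProbabilityMeasure_map (Fmap_meas 1).aemeasurable
  have h2 : IsProbabilityMeasure (unif.map (Fmap (-1))) :=
    Measure.isProbabilityMeasure_map (Fmap_meas (-1)).aemeasurable
  constructor
  simp [piPlan, measure_univ, ennhalf]

lemma piPlan_marginal (g : (Fin 3 → ℝ) → ℝ) (hg : Measurable g) :
    piPlan.map g = (2:ENNReal)⁻¹ • (unif.map (g ∘ Fmap 1)) +
      (2:ENNReal)⁻¹ • (unif.map (g ∘ Fmap (-1))) := by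
  rw [piPlan, Measure.map_add _ _ hg, Measure.map_smul, Measure.map_smul,
    Measure.map_map hg (Fmap_meas 1), Measure.map_map hg (Fmap_meas (-1))]

lemma piPlan_m0 : piPlan.map (fun f => f 0) = unif := by
  rw [piPlan_marginal _ (measurable_pi_apply 0)]
  have : ∀ s : ℝ, (fun f : Fin 3 → ℝ => f 0) ∘ Fmap s = id := by
    intro s; funext x; simp [Fmap]
  rw [this 1, this (-1), Measure.map_id, ← add_smul, ennhalf, one_smul]

lemma piPlan_m1 : piPlan.map (fun f => f 1) = unif := by
  rw [piPlan_marginal _ (measurable_pi_apply 1)]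
  have h : ∀ s : ℝ, (fun f : Fin 3 → ℝ => f 1) ∘ Fmap s = fun x => (x + s)/2 := by
    intro s; funext x; simp [Fmap]
  rw [h 1, h (-1), map_affine_unif, map_affine_unif]
  rw [show ((1:ℝ)-1)/2 = 0 by norm_num, show ((1:ℝ)+1)/2 = 1 by norm_num,
    show ((-1:ℝ)-1)/2 = -1 by norm_num, show ((-1:ℝ)+1)/2 = 0 by norm_num]
  rw [unif, restrict_split, smul_add]
  exact add_comm _ _

lemma piPlan_m2 : piPlan.map (fun f => f 2) =
    (2:ENNReal)⁻¹ • Measure.dirac (1:ℝ) + (2:ENNReal)⁻¹ • Measure.dirac (-1:ℝ) := by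
  rw [piPlan_marginal _ (measurable_pi_apply 2)]
  have h : ∀ s : ℝ, (fun f : Fin 3 → ℝ => f 2) ∘ Fmap s = fun _ => s := by
    intro s; funext x; simp [Fmap]
  rw [h 1, h (-1), Measure.map_const, Measure.map_const]
  simp [measure_univ]

lemma piPlan_ae : ∀ᵐ v ∂piPlan, v 1 = (v 0 + v 2)/2 := by
  rw [ae_iff]
  have hms : MeasurableSet {v : Fin 3 → ℝ | ¬ v 1 = (v 0 + v 2)/2} := by
    apply (measurableSet_eq_fun (measurable_pi_apply 1) _).compl
    fun_prop
  rw [piPlan]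
  simp only [Measure.add_apply, Measure.smul_apply, smul_eq_mul]
  rw [Measure.map_apply (Fmap_meas 1) hms, Measure.map_apply (Fmap_meas (-1)) hms]
  have h1 : Fmap 1 ⁻¹' {v : Fin 3 → ℝ | ¬ v 1 = (v 0 + v 2)/2} = ∅ := by
    ext x; simp [Fmap]
  have h2 : Fmap (-1) ⁻¹' {v : Fin 3 → ℝ | ¬ v 1 = (v 0 + v 2)/2} = ∅ := by
    ext x; simp [Fmap]
  rw [h1, h2]
  simp

lemma piPlan_integral : ∫ v, acc3 (v 0) (v 1) (v 2) ∂piPlan = 0 := by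
  rw [integral_congr_ae (g := fun _ => (0:ℝ)) (piPlan_ae.mono fun v hv => acc3_midpoint hv)]
  simp

lemma unif_apply {s : Set ℝ} (hs : MeasurableSet s) :
    unif s = 2⁻¹ * volume (s ∩ Set.Icc (-1:ℝ) 1) := by
  rw [unif, Measure.smul_apply, Measure.restrict_apply hs, smul_eq_mul]

lemma unif_compl_Icc : unif (Set.Icc (-1:ℝ) 1)ᶜ = 0 := by
  rw [unif_apply measurableSet_Icc.compl, Set.compl_inter_self]
  simp

lemma unif_ae_Icc : ∀ᵐ x ∂unif, x ∈ Set.Icc (-1:ℝ) 1 := by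
  rw [ae_iff]
  exact unif_compl_Icc

section Part2
variable {T1 T2 : ℝ → ℝ}

lemma T1_ae (hT1 : Measurable T1) (h1 : Measure.map T1 unif = unif) :
    ∀ᵐ x ∂unif, T1 x ∈ Set.Icc (-1:ℝ) 1 := by
  rw [ae_iff]
  have : unif {x | ¬ T1 x ∈ Set.Icc (-1:ℝ) 1} = unif (T1 ⁻¹' (Set.Icc (-1:ℝ) 1)ᶜ) := rfl
  rw [this, ← Measure.map_apply hT1 measurableSet_Icc.compl, h1, unif_compl_Icc]

lemma T2_ae (hT2 : Measurable T2) (h2 : Measure.map T2 unif =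
    (2:ENNReal)⁻¹ • Measure.dirac (1:ℝ) + (2:ENNReal)⁻¹ • Measure.dirac (-1:ℝ)) :
    ∀ᵐ x ∂unif, T2 x = 1 ∨ T2 x = -1 := by
  rw [ae_iff]
  have hD : MeasurableSet ({1, -1} : Set ℝ)ᶜ := (Set.Finite.measurableSet (by simp)).compl
  have : {x | ¬ (T2 x = 1 ∨ T2 x = -1)} = T2 ⁻¹' ({1, -1} : Set ℝ)ᶜ := by
    ext x; simp [Set.mem_preimage]
  rw [this, ← Measure.map_apply hT2 hD, h2]
  simp only [Measure.add_apply, Measure.smul_apply, smul_eq_mul]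
  rw [Measure.dirac_apply' _ hD, Measure.dirac_apply' _ hD]
  simp

lemma T2_half (hT2 : Measurable T2) (h2 : Measure.map T2 unif =
    (2:ENNReal)⁻¹ • Measure.dirac (1:ℝ) + (2:ENNReal)⁻¹ • Measure.dirac (-1:ℝ)) :
    unif (T2 ⁻¹' {1}) = 2⁻¹ := by
  rw [← Measure.map_apply hT2 (measurableSet_singleton 1), h2]
  simp only [Measure.add_apply, Measure.smul_apply, smul_eq_mul]
  rw [Measure.dirac_apply' _ (measurableSet_singleton 1),
    Measure.dirac_apply' _ (measurableSet_singleton 1),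
    Set.indicator_of_mem (by norm_num) 1, Set.indicator_of_notMem (by norm_num) 1]
  simp

end Part2

lemma ofReal_half : ENNReal.ofReal 2⁻¹ = (2:ENNReal)⁻¹ := by
  rw [ENNReal.ofReal_inv_of_pos (by norm_num : (0:ℝ) < 2)]
  norm_num

lemma part2 : ¬ ∃ T1 T2 : ℝ → ℝ, Measurable T1 ∧ Measurable T2 ∧
    Measure.map T1 unif = unif ∧
    Measure.map T2 unif =
      (2 : ENNReal)⁻¹ • Measure.dirac (1:ℝ) + (2 : ENNReal)⁻¹ • Measure.dirac (-1:ℝ) ∧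
    ∫ x, acc3 x (T1 x) (T2 x) ∂unif = 0 := by
  rintro ⟨T1, T2, hT1, hT2, h1, h2, hI⟩
  -- rewrite the integrand via the formula
  have hκ : (16:ℝ) ≤ acc3 0 1 0 := kappa_lb
  set κ := acc3 0 1 0 with hκdef
  set g : ℝ → ℝ := fun x => (T1 x - (x + T2 x)/2)^2 with hg
  have hIg : (∫ x, g x ∂unif) * κ = 0 := by
    rw [← hI]
    rw [← integral_mul_const]
    congr 1
    funext x
    rw [acc3_formula]
  have hgmeas : Measurable g := by fun_prop
  have hgint : Integrable g unif := by
    refine Integrable.mono' (integrable_const (4:ℝ)) hgmeas.aestronglyMeasurable ?_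
    filter_upwards [unif_ae_Icc, T1_ae hT1 h1, T2_ae hT2 h2] with x hx hx1 hx2
    rw [Real.norm_eq_abs, abs_of_nonneg (sq_nonneg _)]
    rcases hx2 with h | h <;>
      · rw [hg]; simp only [h]
        nlinarith [hx.1, hx.2, hx1.1, hx1.2]
  have hg0 : ∫ x, g x ∂unif = 0 := by
    rcases mul_eq_zero.mp hIg with h | h
    · exact h
    · linarith
  have hmid : ∀ᵐ x ∂unif, T1 x = (x + T2 x)/2 := by
    have := (integral_eq_zero_iff_of_nonneg (fun x => sq_nonneg _) hgint).mp hg0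
    filter_upwards [this] with x hx
    have : (T1 x - (x + T2 x)/2)^2 = 0 := hx
    have := pow_eq_zero_iff (n := 2) (by norm_num) |>.mp this
    linarith [sub_eq_zero.mp this]
  -- the transport sets
  set A : Set ℝ := T2 ⁻¹' {1} with hAdef
  have hAmeas : MeasurableSet A := hT2 (measurableSet_singleton 1)
  set B : Set ℝ := A ∩ Set.Ioo (-1:ℝ) 1 with hBdef
  have hBmeas : MeasurableSet B := hAmeas.inter measurableSet_Ioo
  set S : Set ℝ := (fun y : ℝ => 2*y - 1) ⁻¹' B with hSdef
  have hSmeas : MeasurableSet S := (by fun_prop : Measurable fun y : ℝ => 2*y - 1) hBmeas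
  have hBsub : B ⊆ Set.Ioo (-1:ℝ) 1 := Set.inter_subset_right
  have hSsub : S ⊆ Set.Icc (-1:ℝ) 1 := by
    intro y hy
    have := hBsub hy
    simp only [Set.mem_Ioo] at this
    constructor <;> linarith [this.1, this.2]
  -- unif S = unif (T1 ⁻¹' S) = unif B
  have e1 : unif S = unif (T1 ⁻¹' S) := by
    rw [← Measure.map_apply hT1 hSmeas, h1]
  have e2 : unif (T1 ⁻¹' S) = unif B := by
    apply measure_congr
    rw [Filter.eventuallyEq_set]
    filter_upwards [hmid, T2_ae hT2 h2, unif_ae_Icc] with x hx hpm hIcc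
    simp only [Set.mem_preimage, hSdef, hx]
    rcases hpm with h | h
    · rw [h]
      have harg : 2 * ((x + 1)/2) - 1 = x := by ring
      rw [harg]
    · rw [h]
      have harg : 2 * ((x + -1)/2) - 1 = x - 2 := by ring
      rw [harg]
      constructor
      · intro hc
        exfalso
        have := (hBsub hc).1
        linarith [hIcc.2]
      · intro hc
        exfalso
        have : T2 x = 1 := hc.1
        rw [h] at this; norm_num at this
  -- compute unif S
  have hvolS : volume S = 2⁻¹ * volume B := by
    have hcomp : (fun y : ℝ => 2*y - 1) = (fun z => (-1) + z) ∘ (fun y => 2*y) := by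
      funext y; simp; ring
    have hmap : Measure.map (fun y : ℝ => 2*y - 1) volume = ENNReal.ofReal 2⁻¹ • volume := by
      rw [hcomp, ← Measure.map_map (by fun_prop) (by fun_prop),
        Real.map_volume_mul_left (by norm_num : (2:ℝ) ≠ 0),
        Measure.map_smul, map_add_left_eq_self volume (-1)]
      norm_num [abs_of_nonneg]
    have := Measure.map_apply (μ := volume) (by fun_prop : Measurable fun y : ℝ => 2*y - 1) hBmeas
    rw [hmap] at this
    rw [hSdef, ← this, Measure.smul_apply, smul_eq_mul]
    rw [ofReal_half]
  have hunifS : unif S = 4⁻¹ * volume B := by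
    rw [unif_apply hSmeas, Set.inter_eq_self_of_subset_left hSsub, hvolS, ← mul_assoc]
    congr 1
    rw [← ENNReal.mul_inv (Or.inl (by norm_num)) (Or.inl (by norm_num))]
    norm_num
  have ae_Ioo : ∀ᵐ x ∂unif, x ∈ Set.Ioo (-1:ℝ) 1 := by
    rw [ae_iff]
    have hset : {x : ℝ | ¬ x ∈ Set.Ioo (-1:ℝ) 1} = (Set.Ioo (-1:ℝ) 1)ᶜ := rfl
    rw [hset, unif_apply measurableSet_Ioo.compl]
    have : (Set.Ioo (-1:ℝ) 1)ᶜ ∩ Set.Icc (-1:ℝ) 1 = {-1, 1} := by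
      ext x
      simp only [Set.mem_inter_iff, Set.mem_compl_iff, Set.mem_Ioo, Set.mem_Icc,
        Set.mem_insert_iff, Set.mem_singleton_iff]
      constructor
      · rintro ⟨hno, hl, hr⟩
        rcases lt_or_eq_of_le hl with h | h
        · right
          by_contra hne
          exact hno ⟨h, lt_of_le_of_ne hr hne⟩
        · left; exact h.symm
      · rintro (rfl | rfl) <;> constructor <;> simp
    rw [this]
    rw [Set.Finite.measure_zero (by simp) volume]
    simp
  have hBA : unif B = unif A := by
    apply measure_congr
    rw [Filter.eventuallyEq_set]
    filter_upwards [ae_Ioo] with x hx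
    rw [hBdef]
    exact ⟨fun h => h.1, fun h => ⟨h, hx⟩⟩
  have hBhalf : unif B = 2⁻¹ := by rw [hBA, hAdef, T2_half hT2 h2]
  have hBvol : unif B = 2⁻¹ * volume B := by
    rw [unif_apply hBmeas, Set.inter_eq_self_of_subset_left
      (hBsub.trans Set.Ioo_subset_Icc_self)]
  have hvolB1 : volume B = 1 := by
    have h21 : (2:ENNReal)⁻¹ * volume B = 2⁻¹ * 1 := by
      rw [← hBvol, hBhalf, mul_one]
    exact (ENNReal.mul_right_inj (by norm_num) (by norm_num)).mp h21
  have : (4:ENNReal)⁻¹ = 2⁻¹ := by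
    rw [← mul_one (4:ENNReal)⁻¹, ← hvolB1, ← hunifS, e1, e2, hBhalf]
  have h42 : (4:ENNReal) = 2 := by
    rwa [inv_inj] at this
  norm_num at h42

theorem stmt_13 :
    (sInf { v : ℝ | ∃ π : Measure (Fin 3 → ℝ), IsProbabilityMeasure π ∧
        Measure.map (fun f => f 0) π = unif ∧
        Measure.map (fun f => f 1) π = unif ∧
        Measure.map (fun f => f 2) π =
          (2 : ENNReal)⁻¹ • Measure.dirac (1:ℝ) + (2 : ENNReal)⁻¹ • Measure.dirac (-1:ℝ) ∧
        v = ∫ f, acc3 (f 0) (f 1) (f 2) ∂π } = 0) ∧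
    ¬ ∃ T1 T2 : ℝ → ℝ, Measurable T1 ∧ Measurable T2 ∧
        Measure.map T1 unif = unif ∧
        Measure.map T2 unif =
          (2 : ENNReal)⁻¹ • Measure.dirac (1:ℝ) + (2 : ENNReal)⁻¹ • Measure.dirac (-1:ℝ) ∧
        ∫ x, acc3 x (T1 x) (T2 x) ∂unif = 0 := by
  constructor
  · have h0mem : (0:ℝ) ∈ { v : ℝ | ∃ π : Measure (Fin 3 → ℝ), IsProbabilityMeasure π ∧
        Measure.map (fun f => f 0) π = unif ∧
        Measure.map (fun f => f 1) π = unif ∧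
        Measure.map (fun f => f 2) π =
          (2 : ENNReal)⁻¹ • Measure.dirac (1:ℝ) + (2 : ENNReal)⁻¹ • Measure.dirac (-1:ℝ) ∧
        v = ∫ f, acc3 (f 0) (f 1) (f 2) ∂π } :=
      ⟨piPlan, inferInstance, piPlan_m0, piPlan_m1, piPlan_m2, piPlan_integral.symm⟩
    have hlb : ∀ v ∈ { v : ℝ | ∃ π : Measure (Fin 3 → ℝ), IsProbabilityMeasure π ∧
        Measure.map (fun f => f 0) π = unif ∧
        Measure.map (fun f => f 1) π = unif ∧
        Measure.map (fun f => f 2) π =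
          (2 : ENNReal)⁻¹ • Measure.dirac (1:ℝ) + (2 : ENNReal)⁻¹ • Measure.dirac (-1:ℝ) ∧
        v = ∫ f, acc3 (f 0) (f 1) (f 2) ∂π }, 0 ≤ v := by
      rintro v ⟨π, hπ, _, _, _, rfl⟩
      exact integral_nonneg fun f => acc3_nonneg _ _ _
    exact le_antisymm (csInf_le ⟨0, hlb⟩ h0mem) (le_csInf ⟨0, h0mem⟩ hlb)
  · exact part2
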